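/- Validity of Paxos: any decided value is the proposed value of some proposer. Formally, in the Paxos transition system, the accepted_value of any acceptor is always either ⊥ or a value that was input by some proposer, and hence any decided value was proposed by some process. -/

import Mathlib

/-- State of a Paxos acceptor. -/
structure AccState (V : Type) where
  minP : ℕ
  accP : ℕ
  accV : Option V

/-- Events at acceptors: a (promised) Prepare, or a successful Accept. -/
inductive Ev (A V : Type) : Type
  | prepare (a : A) (n : ℕ)
  | accept (a : A) (n : ℕ) (v : V)

/-- Effect of an event on the state of acceptor `a`. -/
def stepAcc {A V : Type} [DecidableEq A] (a : A) (s : AccState V) : Ev A V → AccState V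
  | .prepare a' n => if a' = a then { s with minP := max s.minP n } else s
  | .accept a' n v => if a' = a ∧ s.minP ≤ n then ⟨n, n, some v⟩ else s

/-- State of acceptor `a` after processing the history `h` (initially `(0,0,⊥)`). -/
def accStateAfter {A V : Type} [DecidableEq A] (h : List (Ev A V)) (a : A) : AccState V :=
  h.foldl (stepAcc a) ⟨0, 0, none⟩

/-- A quorum is a majority of the acceptors. -/
def Quorum {A : Type} [Fintype A] (Q : Finset A) : Prop :=
  Fintype.card A < 2 * Q.card

/-- Well-formed Paxos histories: every accept event `accept a n v` at position `i`
satisfies: (1) it succeeds, i.e. `n ≥` the acceptor's `min_proposal` at that point;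
(2) all accepts with proposal number `n` carry the same value (proposal numbers are
owned by a single proposer); (3) the proposer of `n` first got acknowledged Prepare
responses from a quorum `Q` (each acceptor `b ∈ Q` had `min_proposal < n` at the time
`t b` of its prepare), and `v` is either the proposer's own input (in `Proposed`) if
no acceptor of `Q` had accepted a value, or the accepted value with the highest
accepted proposal among the responses. -/
def WF {A V : Type} [Fintype A] [DecidableEq A] (Proposed : Set V)
    (h : List (Ev A V)) : Prop :=
  ∀ i a n v, h[(i : ℕ)]? = some (.accept a n v) →
    (accStateAfter (h.take i) a).minP ≤ n ∧
    (∀ j a' v', h[(j : ℕ)]? = some (.accept a' n v') → v' = v) ∧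
    (∃ Q : Finset A, Quorum Q ∧ ∃ t : A → ℕ,
      (∀ b ∈ Q, t b < i ∧ h[t b]? = some (.prepare b n) ∧
        (accStateAfter (h.take (t b)) b).minP < n) ∧
      (((∀ b ∈ Q, (accStateAfter (h.take (t b)) b).accV = none) ∧ v ∈ Proposed) ∨
       (∃ b0 ∈ Q, (accStateAfter (h.take (t b0)) b0).accV = some v ∧
         ∀ b ∈ Q,
           (accStateAfter (h.take (t b)) b).accP
             ≤ (accStateAfter (h.take (t b0)) b0).accP)))

/-- `v` is chosen (decided) with proposal number `n`: a quorum of acceptors has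
accepted `(n, v)`. -/
def Chosen {A V : Type} [Fintype A] [DecidableEq A] (h : List (Ev A V)) (n : ℕ)
    (v : V) : Prop :=
  ∃ Q : Finset A, Quorum Q ∧ ∀ a ∈ Q, ∃ i, h[(i : ℕ)]? = some (Ev.accept a n v)

lemma accV_source {A V : Type} [DecidableEq A] (l : List (Ev A V)) (a : A) (v : V)
    (hl : (accStateAfter l a).accV = some v) :
    ∃ j n, l[(j : ℕ)]? = some (Ev.accept a n v) := by
  induction l using List.reverseRecOn with
  | nil => simp [accStateAfter] at hl
  | append_singleton l e ih =>
    have : accStateAfter (l ++ [e]) a = stepAcc a (accStateAfter l a) e := by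
      simp [accStateAfter, List.foldl_append]
    rw [this] at hl
    cases e with
    | prepare a' n =>
      simp only [stepAcc] at hl
      split at hl
      · obtain ⟨j, n', hj⟩ := ih hl
        exact ⟨j, n', by rw [List.getElem?_append_left (List.getElem?_eq_some_iff.1 hj).1]; exact hj⟩
      · obtain ⟨j, n', hj⟩ := ih hl
        exact ⟨j, n', by rw [List.getElem?_append_left (List.getElem?_eq_some_iff.1 hj).1]; exact hj⟩
    | accept a' n w =>
      simp only [stepAcc] at hl
      split at hl
      · rename_i hc
        refine ⟨l.length, n, ?_⟩
        simp only [Option.some.injEq] at hl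
        rw [List.getElem?_append_right le_rfl]
        simp [hc.1, hl]
      · obtain ⟨j, n', hj⟩ := ih hl
        exact ⟨j, n', by rw [List.getElem?_append_left (List.getElem?_eq_some_iff.1 hj).1]; exact hj⟩

lemma accept_proposed {A V : Type} [Fintype A] [DecidableEq A] (Proposed : Set V)
    (h : List (Ev A V)) (hwf : WF Proposed h) :
    ∀ i a n v, h[(i : ℕ)]? = some (Ev.accept a n v) → v ∈ Proposed := by
  intro i
  induction i using Nat.strong_induction_on with
  | _ i ih =>
    intro a n v hi
    obtain ⟨-, -, Q, -, t, hQ, hcase⟩ := hwf i a n v hi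
    rcases hcase with ⟨-, hv⟩ | ⟨b0, hb0, hacc, -⟩
    · exact hv
    · obtain ⟨j, n', hj⟩ := accV_source _ _ _ hacc
      have hjlt : j < t b0 := by
        have := (List.getElem?_eq_some_iff.1 hj).1
        have hle := List.length_take_le (t b0) h
        omega
      have hj' : h[j]? = some (.accept b0 n' v) := by
        rwa [List.getElem?_take_of_lt hjlt] at hj
      exact ih j (lt_trans hjlt (hQ b0 hb0).1) b0 n' v hj'

/-- Validity of Paxos: at every point of a well-formed execution, the
`accepted_value` of any acceptor is either `⊥` or a value input by some proposer
(i.e. in `Proposed`); hence any decided (chosen) value was proposed by some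
process. -/
theorem paxos_validity {A V : Type} [Fintype A] [DecidableEq A] :
    ∀ (Proposed : Set V) (h : List (Ev A V)),
      WF Proposed h →
      (∀ (i : ℕ) (a : A) (v : V),
        (accStateAfter (h.take i) a).accV = some v → v ∈ Proposed) ∧
      (∀ (n : ℕ) (v : V), Chosen h n v → v ∈ Proposed) := by
  intro Proposed h hwf
  constructor
  · intro i a v hv
    obtain ⟨j, n, hj⟩ := accV_source _ _ _ hv
    have hjlt : j < i := by
      have := (List.getElem?_eq_some_iff.1 hj).1
      have hle := List.length_take_le i h
      omega
    rw [List.getElem?_take_of_lt hjlt] at hj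
    exact accept_proposed Proposed h hwf j a n v hj
  · rintro n v ⟨Q, hQ, hacc⟩
    have hne : Q.Nonempty := by
      rw [← Finset.card_pos]
      unfold Quorum at hQ
      omega
    obtain ⟨a, ha⟩ := hne
    obtain ⟨i, hi⟩ := hacc a ha
    exact accept_proposed Proposed h hwf i a n v hi
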